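/- Let δ, c be complex numbers with δ^3 ≠ 1, set p = δc/(δ^3−1) and h_k(x) = 1/(δ^{3k}(1/x − p) + p). If a ≠ 0 satisfies h_{m−1}(−a/(δ(δ + ca))) = a for an integer m ≥ 1 (with all expressions defined), then 1/a = −δ(δ^{3m}−1)c / ((δ^3−1)(δ^{3m−1}+1)). -/

import Mathlib

/-- The Möbius map `h_k(x) = 1/(δ^{3k}(1/x − p) + p)` with `p = δc/(δ³−1)`. -/
noncomputable def moebiusH (δ c : ℂ) (k : ℕ) (x : ℂ) : ℂ :=
  1 / (δ^(3*k) * (1/x - δ*c/(δ^3 - 1)) + δ*c/(δ^3 - 1))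

theorem stmt_11 (δ c a : ℂ) (hδ3 : δ^3 ≠ 1) (hδ : δ ≠ 0) (ha : a ≠ 0)
    (hden : δ + c*a ≠ 0) (m : ℕ) (hm : 1 ≤ m) (hpow : δ^(3*m-1) + 1 ≠ 0)
    (h : moebiusH δ c (m-1) (-a / (δ * (δ + c*a))) = a) :
    1/a = -δ * (δ^(3*m) - 1) * c / ((δ^3 - 1) * (δ^(3*m-1) + 1)) := by
  obtain ⟨n, rfl⟩ : ∃ n, m = n + 1 := ⟨m - 1, (Nat.succ_pred_eq_of_pos hm).symm⟩
  have e1 : 3 * (n + 1) - 1 = 3 * n + 2 := by omega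
  have e2 : 3 * (n + 1) = 3 * n + 3 := by omega
  rw [e1] at hpow ⊢
  rw [e2]
  simp only [Nat.add_sub_cancel] at h
  have hδ3' : δ ^ 3 - 1 ≠ 0 := sub_ne_zero.mpr hδ3
  unfold moebiusH at h
  have hinv : 1 / (-a / (δ * (δ + c * a))) = -(δ * (δ + c * a)) / a := by
    rw [one_div_div]; ring
  rw [hinv] at h
  set D := δ ^ (3 * n) * (-(δ * (δ + c * a)) / a - δ * c / (δ ^ 3 - 1)) +
      δ * c / (δ ^ 3 - 1) with hDdef
  have hD : D ≠ 0 := by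
    intro h0
    rw [h0] at h
    simp at h
    exact ha h.symm
  have key : 1 = a * D := (div_eq_iff hD).mp h
  have hD2 : a * (δ ^ 3 - 1) * D =
      δ ^ (3 * n) * (-(δ * (δ + c * a)) * (δ ^ 3 - 1) - a * δ * c) + a * δ * c := by
    rw [hDdef]
    field_simp
  clear_value D
  have key2 : a * (δ ^ (3 * n) * (-(δ * (δ + c * a)) * (δ ^ 3 - 1) - a * δ * c) + a * δ * c)
      = a * (δ ^ 3 - 1) := by
    linear_combination (-(a * (δ ^ 3 - 1))) * key + (-a) * hD2
  have key3 : δ ^ (3 * n) * (-(δ * (δ + c * a)) * (δ ^ 3 - 1) - a * δ * c) + a * δ * c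
      = δ ^ 3 - 1 := mul_left_cancel₀ ha key2
  rw [div_eq_div_iff ha (mul_ne_zero hδ3' hpow)]
  linear_combination (-1 : ℂ) * key3
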